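/- For all α ∈ (0, π/2), we have 1/cos α + tan α + (3/2)π − 2α + 1 ≥ (7/6)π + 1 + √3, with equality iff α = π/6. -/

import Mathlib

open Real Set

noncomputable def Fh : ℝ → ℝ := fun x => 1 / Real.cos x + Real.tan x - 2 * x

lemma hasDerivAt_Fh {x : ℝ} (hx : Real.cos x ≠ 0) :
    HasDerivAt Fh ((2 * Real.sin x - 1) * (Real.sin x + 1) / Real.cos x ^ 2) x := by
  have h1 := (hasDerivAt_const x (1:ℝ)).div (Real.hasDerivAt_cos x) hx
  have h2 := Real.hasDerivAt_tan hx
  have h3 : HasDerivAt (fun y : ℝ => 2 * y) 2 x := by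
    simpa using (hasDerivAt_id x).const_mul (2:ℝ)
  have h : HasDerivAt Fh _ x := (h1.add h2).sub h3
  convert h using 1
  have hs := Real.sin_sq_add_cos_sq x
  field_simp
  ring_nf
  nlinarith [hs, sq_nonneg (Real.cos x)]

lemma cos_pos_of_Icc {x : ℝ} (h : x ∈ Icc 0 (Real.pi / 6)) : 0 < Real.cos x := by
  apply Real.cos_pos_of_mem_Ioo
  constructor <;> nlinarith [Real.pi_pos, h.1, h.2]

lemma cos_pos_of_Ico {x : ℝ} (h : x ∈ Ico (Real.pi / 6) (Real.pi / 2)) : 0 < Real.cos x := by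
  apply Real.cos_pos_of_mem_Ioo
  constructor <;> nlinarith [Real.pi_pos, h.1, h.2]

lemma Fh_anti : StrictAntiOn Fh (Icc 0 (Real.pi / 6)) := by
  apply strictAntiOn_of_deriv_neg (convex_Icc _ _)
  · intro x hx
    exact (hasDerivAt_Fh (cos_pos_of_Icc hx).ne').continuousAt.continuousWithinAt
  · intro x hx
    rw [interior_Icc] at hx
    have hc : 0 < Real.cos x := cos_pos_of_Icc ⟨hx.1.le, hx.2.le⟩
    rw [(hasDerivAt_Fh hc.ne').deriv]
    have hs1 : Real.sin x < 1 / 2 := by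
      have := Real.strictMonoOn_sin (by constructor <;> nlinarith [Real.pi_pos, hx.1, hx.2])
        (by constructor <;> nlinarith [Real.pi_pos]) hx.2
      rwa [Real.sin_pi_div_six] at this
    have hs0 : 0 < Real.sin x := Real.sin_pos_of_pos_of_lt_pi hx.1 (by nlinarith [Real.pi_pos, hx.2])
    apply div_neg_of_neg_of_pos
    · nlinarith
    · positivity

lemma Fh_mono : StrictMonoOn Fh (Ico (Real.pi / 6) (Real.pi / 2)) := by
  apply strictMonoOn_of_deriv_pos (convex_Ico _ _)
  · intro x hx
    exact (hasDerivAt_Fh (cos_pos_of_Ico hx).ne').continuousAt.continuousWithinAt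
  · intro x hx
    rw [interior_Ico] at hx
    have hc : 0 < Real.cos x := cos_pos_of_Ico ⟨hx.1.le, hx.2⟩
    rw [(hasDerivAt_Fh hc.ne').deriv]
    have hs1 : 1 / 2 < Real.sin x := by
      have := Real.strictMonoOn_sin (by constructor <;> nlinarith [Real.pi_pos])
        (by constructor <;> nlinarith [Real.pi_pos, hx.1, hx.2]) hx.1
      rwa [Real.sin_pi_div_six] at this
    apply div_pos
    · nlinarith
    · positivity

lemma Fh_pi_div_six : Fh (Real.pi / 6) = Real.sqrt 3 - Real.pi / 3 := by
  have h3 : Real.sqrt 3 ≠ 0 := by positivity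
  have hsq : Real.sqrt 3 * Real.sqrt 3 = 3 := Real.mul_self_sqrt (by norm_num)
  unfold Fh
  rw [Real.tan_eq_sin_div_cos, Real.sin_pi_div_six, Real.cos_pi_div_six]
  field_simp
  nlinarith [hsq]

lemma Fh_min {α : ℝ} (hα : α ∈ Set.Ioo 0 (Real.pi / 2)) (hne : α ≠ Real.pi / 6) :
    Fh (Real.pi / 6) < Fh α := by
  have hpi := Real.pi_pos
  rcases lt_or_gt_of_ne hne with h | h
  · exact Fh_anti ⟨hα.1.le, h.le⟩ ⟨by linarith, le_refl _⟩ h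
  · exact Fh_mono ⟨le_refl _, by linarith⟩ ⟨h.le, hα.2⟩ h

theorem hunter_length_ge_with_equality_iff (α : ℝ) (hα : α ∈ Set.Ioo 0 (Real.pi / 2)) :
    1 / Real.cos α + Real.tan α + (3 / 2) * Real.pi - 2 * α + 1
      ≥ (7 / 6) * Real.pi + 1 + Real.sqrt 3 ∧
    (1 / Real.cos α + Real.tan α + (3 / 2) * Real.pi - 2 * α + 1
      = (7 / 6) * Real.pi + 1 + Real.sqrt 3 ↔ α = Real.pi / 6) := by
  have key : ∀ β ∈ Set.Ioo 0 (Real.pi / 2), β ≠ Real.pi / 6 →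
      Real.sqrt 3 - Real.pi / 3 < Fh β := fun β hβ hne => Fh_pi_div_six ▸ Fh_min hβ hne
  have hF : Fh α = 1 / Real.cos α + Real.tan α - 2 * α := rfl
  constructor
  · by_cases h : α = Real.pi / 6
    · subst h
      have := Fh_pi_div_six
      rw [hF] at this
      linarith
    · have := key α hα h
      rw [hF] at this
      linarith
  · constructor
    · intro heq
      by_contra h
      have := key α hα h
      rw [hF] at this
      linarith
    · intro h
      subst h
      have := Fh_pi_div_six
      unfold Fh at this
      linarith
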